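/- arXiv:1112.3810 — 6 statements merged into one kernel-verified Lean document; each statement's English description precedes it below -/
import Mathlib

section
/- Let H be an M×K complex matrix with M ≥ K whose squared Frobenius norm equals MK, and let λ₁,…,λ_K be its singular values. Then for any p_u > 0, the sum-rate R = Σ_{k=1}^K log₂(1 + p_u λ_k²) satisfies log₂(1 + M K p_u) ≤ R ≤ K log₂(1 + M p_u). -/
open Matrix Finset

lemma one_add_sum_le_prod {ι : Type*} (t : Finset ι) (f : ι → ℝ)
    (hf : ∀ i ∈ t, 0 ≤ f i) : 1 + ∑ i ∈ t, f i ≤ ∏ i ∈ t, (1 + f i) := by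
  induction t using Finset.cons_induction with
  | empty => simp
  | cons a s ha ih =>
    rw [Finset.sum_cons, Finset.prod_cons]
    have hfa : 0 ≤ f a := hf a (Finset.mem_cons_self a s)
    have hs : ∀ i ∈ s, 0 ≤ f i := fun i hi => hf i (Finset.mem_cons_of_mem hi)
    have hsum : 0 ≤ ∑ i ∈ s, f i := Finset.sum_nonneg hs
    have h1 : (1 : ℝ) + ∑ i ∈ s, f i ≤ ∏ i ∈ s, (1 + f i) := ih hs
    nlinarith [mul_nonneg hfa hsum]

/-- For an `M × K` complex matrix `H` with `M ≥ K` whose squared Frobenius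
norm equals `M * K`, with singular values `λ k` (the square roots of the eigenvalues of
`Hᴴ * H`), the sum-rate `R = ∑ k, log₂ (1 + p_u * (λ k)^2)` satisfies
`log₂ (1 + M * K * p_u) ≤ R ≤ K * log₂ (1 + M * p_u)`. -/
theorem stmt0 (M K : ℕ) (hMK : K ≤ M) (H : Matrix (Fin M) (Fin K) ℂ)
    (hHerm : (Hᴴ * H).IsHermitian)
    (lam : Fin K → ℝ)
    (hlam_nonneg : ∀ k, 0 ≤ lam k)
    (hlam : ∀ k, (lam k) ^ 2 = hHerm.eigenvalues k)
    (hFrob : ∑ i : Fin M, ∑ j : Fin K, ‖H i j‖ ^ 2 = (M : ℝ) * K)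
    (pu : ℝ) (hpu : 0 < pu) :
    Real.logb 2 (1 + (M : ℝ) * K * pu) ≤ ∑ k : Fin K, Real.logb 2 (1 + pu * (lam k) ^ 2) ∧
    ∑ k : Fin K, Real.logb 2 (1 + pu * (lam k) ^ 2) ≤ (K : ℝ) * Real.logb 2 (1 + (M : ℝ) * pu) := by
  -- trace identity : sum of eigenvalues equals Frobenius norm squared
  have htrace : (Hᴴ * H).trace = ∑ k : Fin K, ((hHerm.eigenvalues k : ℝ) : ℂ) := by
    conv_lhs => rw [hHerm.spectral_theorem]
    rw [Unitary.conjStarAlgAut_apply, Matrix.trace_mul_cycle,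
      (Matrix.mem_unitaryGroup_iff').mp (Matrix.IsHermitian.eigenvectorUnitary hHerm).2, one_mul,
      Matrix.trace_diagonal]
    simp [Function.comp]
  have htrace2 : (Hᴴ * H).trace = ((∑ i : Fin M, ∑ j : Fin K, ‖H i j‖ ^ 2 : ℝ) : ℂ) := by
    rw [Matrix.trace]
    push_cast
    rw [Finset.sum_comm]
    congr 1
    ext j
    simp only [Matrix.diag, Matrix.mul_apply, Matrix.conjTranspose_apply]
    congr 1
    ext i
    simp [Complex.star_def, ← Complex.normSq_eq_conj_mul_self, ← Complex.sq_norm]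
  have hsum : ∑ k : Fin K, (lam k) ^ 2 = (M : ℝ) * K := by
    have : (((∑ k : Fin K, (lam k) ^ 2 : ℝ)) : ℂ) = (((M : ℝ) * K : ℝ) : ℂ) := by
      push_cast
      calc (∑ k : Fin K, ((lam k : ℂ)) ^ 2) = ∑ k : Fin K, ((hHerm.eigenvalues k : ℝ) : ℂ) := by
            refine Finset.sum_congr rfl fun k _ => ?_
            rw [← hlam k]; push_cast; ring
        _ = (Hᴴ * H).trace := htrace.symm
        _ = ((M : ℝ) : ℂ) * ((K : ℝ) : ℂ) := by rw [htrace2, hFrob]; push_cast; ring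
    exact_mod_cast this
  have hpos : ∀ k : Fin K, (0 : ℝ) < 1 + pu * (lam k) ^ 2 := fun k => by
    nlinarith [sq_nonneg (lam k), hlam_nonneg k]
  constructor
  · -- lower bound
    have hprod : 1 + (M : ℝ) * K * pu ≤ ∏ k : Fin K, (1 + pu * (lam k) ^ 2) := by
      have := one_add_sum_le_prod Finset.univ (fun k : Fin K => pu * (lam k) ^ 2)
        (fun k _ => by positivity)
      have hs : ∑ k : Fin K, pu * (lam k) ^ 2 = (M : ℝ) * K * pu := by
        rw [← Finset.mul_sum, hsum]; ring
      linarith [this, hs ▸ this]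
    have hlog : Real.logb 2 (1 + (M : ℝ) * K * pu) ≤
        Real.logb 2 (∏ k : Fin K, (1 + pu * (lam k) ^ 2)) := by
      apply Real.logb_le_logb_of_le (by norm_num) (by positivity) hprod
    calc Real.logb 2 (1 + (M : ℝ) * K * pu)
        ≤ Real.logb 2 (∏ k : Fin K, (1 + pu * (lam k) ^ 2)) := hlog
      _ = ∑ k : Fin K, Real.logb 2 (1 + pu * (lam k) ^ 2) := by
          rw [Real.logb, Real.log_prod (fun k _ => (hpos k).ne'), Finset.sum_div]
          rfl
  · -- upper bound (Jensen)
    rcases Nat.eq_zero_or_pos K with hK | hK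
    · subst hK; simp
    have hKpos : (0 : ℝ) < K := by exact_mod_cast hK
    have hconc : ConcaveOn ℝ (Set.Ioi 0) Real.log := strictConcaveOn_log_Ioi.concaveOn
    have hjensen := hconc.le_map_sum (t := Finset.univ) (w := fun _ : Fin K => 1 / (K : ℝ))
      (p := fun k => 1 + pu * (lam k) ^ 2)
      (fun _ _ => by positivity)
      (by simp [Finset.sum_const, Finset.card_univ]; field_simp)
      (fun k _ => hpos k)
    have hmean : ∑ k : Fin K, (1 / (K : ℝ)) • (1 + pu * (lam k) ^ 2) = 1 + (M : ℝ) * pu := by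
      simp only [smul_eq_mul]
      rw [← Finset.mul_sum, Finset.sum_add_distrib, Finset.sum_const, Finset.card_univ,
        Fintype.card_fin, ← Finset.mul_sum, hsum]
      field_simp
      ring
    rw [hmean] at hjensen
    -- hjensen : ∑ (1/K) • log (1 + pu * lam²) ≤ log (1 + M * pu)
    have h2 : (0 : ℝ) < Real.log 2 := Real.log_pos (by norm_num)
    have key : ∑ k : Fin K, Real.log (1 + pu * (lam k) ^ 2) ≤ (K : ℝ) * Real.log (1 + (M : ℝ) * pu) := by
      have := mul_le_mul_of_nonneg_left hjensen (le_of_lt hKpos)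
      rw [Finset.mul_sum] at this
      calc ∑ k : Fin K, Real.log (1 + pu * (lam k) ^ 2)
          = ∑ k : Fin K, (K : ℝ) * ((1 / (K : ℝ)) • Real.log (1 + pu * (lam k) ^ 2)) := by
            refine Finset.sum_congr rfl fun k _ => ?_
            simp only [smul_eq_mul]; field_simp
        _ ≤ (K : ℝ) * Real.log (1 + (M : ℝ) * pu) := this
    simp only [Real.logb, ← Finset.sum_div]
    rw [div_le_iff₀ h2]
    calc (∑ k : Fin K, Real.log (1 + pu * (lam k) ^ 2))
        ≤ (K : ℝ) * Real.log (1 + (M : ℝ) * pu) := key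
      _ = (K : ℝ) * (Real.log (1 + (M : ℝ) * pu) / Real.log 2) * Real.log 2 := by
          field_simp
end

section
/- Imperfect-CSI power scaling for MRC: with p_u = E_u/√M, the lower bound log₂(1 + τ p_u² (M−1) β_k² / (p_u(τ p_u β_k + 1) Σ_{i≠k} β_i + (τ+1) p_u β_k + 1)) converges to log₂(1 + τ β_k² E_u²) as M → ∞. -/
open Filter Finset

set_option maxHeartbeats 1000000 in
/-- Imperfect-CSI power scaling for MRC. With `p_u = E_u/√M`, the lower
bound `log₂(1 + τ p_u² (M−1) β_k² / (p_u(τ p_u β_k + 1) ∑_{i≠k} β_i + (τ+1) p_u β_k + 1))`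
converges to `log₂(1 + τ β_k² E_u²)` as `M → ∞`. -/
theorem stmt13 (K : ℕ) (k : Fin K) (β : Fin K → ℝ) (hβ : ∀ i, 0 < β i)
    (τ : ℕ) (hτ : 1 ≤ τ) (Eu : ℝ) (hEu : 0 < Eu) :
    Tendsto (fun M : ℕ =>
        Real.logb 2 (1 +
          (τ : ℝ) * (Eu / Real.sqrt M) ^ 2 * ((M : ℝ) - 1) * (β k) ^ 2
          / ((Eu / Real.sqrt M) * ((τ : ℝ) * (Eu / Real.sqrt M) * β k + 1)
                * ∑ i ∈ univ \ {k}, β i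
              + ((τ : ℝ) + 1) * (Eu / Real.sqrt M) * β k + 1)))
      atTop (nhds (Real.logb 2 (1 + (τ : ℝ) * (β k) ^ 2 * Eu ^ 2))) := by
  have hb := hβ k
  have hsqrt : Tendsto (fun M : ℕ => Real.sqrt M) atTop atTop := by
    refine tendsto_atTop_atTop.2 fun b => ⟨⌈b ^ 2⌉₊, fun M hM => ?_⟩
    have h1 : (b ^ 2 : ℝ) ≤ M := le_trans (Nat.le_ceil _) (by exact_mod_cast hM)
    calc b ≤ Real.sqrt (b ^ 2) := by
            rw [Real.sqrt_sq_eq_abs]; exact le_abs_self b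
      _ ≤ Real.sqrt M := Real.sqrt_le_sqrt h1
  have hp : Tendsto (fun M : ℕ => Eu / Real.sqrt M) atTop (nhds 0) := by
    simpa [div_eq_mul_inv] using hsqrt.inv_tendsto_atTop.const_mul Eu
  have hinv : Tendsto (fun M : ℕ => ((M : ℝ))⁻¹) atTop (nhds 0) :=
    tendsto_natCast_atTop_atTop.inv_tendsto_atTop
  -- denominator
  have hD : Tendsto (fun M : ℕ =>
      (Eu / Real.sqrt M) * ((τ : ℝ) * (Eu / Real.sqrt M) * β k + 1)
        * ∑ i ∈ univ \ {k}, β i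
      + ((τ : ℝ) + 1) * (Eu / Real.sqrt M) * β k + 1) atTop (nhds 1) := by
    have h := (((hp.mul ((((tendsto_const_nhds (x := (τ : ℝ))).mul hp).mul
        (tendsto_const_nhds (x := β k))).add (tendsto_const_nhds (x := (1:ℝ))))).mul
        (tendsto_const_nhds (x := ∑ i ∈ univ \ {k}, β i))).add
        (((tendsto_const_nhds (x := (τ : ℝ) + 1)).mul hp).mul
        (tendsto_const_nhds (x := β k)))).add (tendsto_const_nhds (x := (1:ℝ)))
    rw [show (0 : ℝ) * ((τ : ℝ) * 0 * β k + 1) * (∑ i ∈ univ \ {k}, β i)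
        + ((τ : ℝ) + 1) * 0 * β k + 1 = 1 from by ring] at h
    exact h
  -- numerator
  have hN : Tendsto (fun M : ℕ =>
      (τ : ℝ) * (Eu / Real.sqrt M) ^ 2 * ((M : ℝ) - 1) * (β k) ^ 2) atTop
      (nhds ((τ : ℝ) * (β k) ^ 2 * Eu ^ 2)) := by
    have hg : Tendsto (fun M : ℕ =>
        (τ : ℝ) * Eu ^ 2 * (1 - ((M : ℝ))⁻¹) * (β k) ^ 2) atTop
        (nhds ((τ : ℝ) * (β k) ^ 2 * Eu ^ 2)) := by
      have h := (((tendsto_const_nhds (x := (τ : ℝ) * Eu ^ 2)).mul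
        ((tendsto_const_nhds (x := (1:ℝ))).sub hinv)).mul
        (tendsto_const_nhds (x := (β k) ^ 2)))
      rw [show (τ : ℝ) * Eu ^ 2 * (1 - 0) * (β k) ^ 2
          = (τ : ℝ) * (β k) ^ 2 * Eu ^ 2 from by ring] at h
      exact h
    refine hg.congr' ?_
    filter_upwards [eventually_ge_atTop 1] with M hM
    have hM0 : (0 : ℝ) < (M : ℝ) := by exact_mod_cast Nat.pos_of_ne_zero (by omega)
    have hs : Real.sqrt M ≠ 0 := by positivity
    have hsq : (Real.sqrt M) ^ 2 = (M : ℝ) := Real.sq_sqrt hM0.le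
    field_simp
    rw [hsq]; ring
  have hval : (0 : ℝ) < 1 + (τ : ℝ) * (β k) ^ 2 * Eu ^ 2 := by positivity
  have hlim : Tendsto (fun M : ℕ =>
      1 + (τ : ℝ) * (Eu / Real.sqrt M) ^ 2 * ((M : ℝ) - 1) * (β k) ^ 2
        / ((Eu / Real.sqrt M) * ((τ : ℝ) * (Eu / Real.sqrt M) * β k + 1)
            * ∑ i ∈ univ \ {k}, β i
          + ((τ : ℝ) + 1) * (Eu / Real.sqrt M) * β k + 1)) atTop
      (nhds (1 + (τ : ℝ) * (β k) ^ 2 * Eu ^ 2)) := by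
    have h := (tendsto_const_nhds (x := (1:ℝ))).add (hN.div hD one_ne_zero)
    rw [show (τ : ℝ) * (β k) ^ 2 * Eu ^ 2 / 1 = (τ : ℝ) * (β k) ^ 2 * Eu ^ 2
        from by ring] at h
    exact h
  have hcont : ContinuousAt (Real.logb 2) (1 + (τ : ℝ) * (β k) ^ 2 * Eu ^ 2) := by
    unfold Real.logb
    exact (Real.continuousAt_log hval.ne').div_const _
  exact hcont.tendsto.comp hlim
end

section
/- Imperfect-CSI power scaling for ZF: with p_u = E_u/√M, the lower bound log₂(1 + τ p_u² (M−K) β_k² / ((τ p_u β_k + 1) Σ_{i=1}^K p_u β_i/(τ p_u β_i + 1) + τ p_u β_k + 1)) converges to log₂(1 + τ β_k² E_u²) as M → ∞. -/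
open Filter Finset

/-- Imperfect-CSI power scaling for ZF. With `p_u = E_u/√M`, the lower
bound `log₂(1 + τ p_u² (M−K) β_k² / ((τ p_u β_k + 1) ∑_{i=1}^K p_u β_i/(τ p_u β_i + 1)
+ τ p_u β_k + 1))` converges to `log₂(1 + τ β_k² E_u²)` as `M → ∞`. -/
theorem stmt14 (K : ℕ) (k : Fin K) (β : Fin K → ℝ) (hβ : ∀ i, 0 < β i)
    (τ : ℕ) (hτ : 1 ≤ τ) (Eu : ℝ) (hEu : 0 < Eu) :
    Tendsto (fun M : ℕ =>
        Real.logb 2 (1 +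
          (τ : ℝ) * (Eu / Real.sqrt M) ^ 2 * ((M : ℝ) - K) * (β k) ^ 2
          / (((τ : ℝ) * (Eu / Real.sqrt M) * β k + 1)
                * ∑ i : Fin K, (Eu / Real.sqrt M) * β i
                    / ((τ : ℝ) * (Eu / Real.sqrt M) * β i + 1)
              + (τ : ℝ) * (Eu / Real.sqrt M) * β k + 1)))
      atTop (nhds (Real.logb 2 (1 + (τ : ℝ) * (β k) ^ 2 * Eu ^ 2))) := by
  set p : ℕ → ℝ := fun M => Eu / Real.sqrt M with hp_def
  have hsqrt0 : Tendsto Real.sqrt atTop atTop := by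
    have h := tendsto_rpow_atTop (show (0:ℝ) < 1/2 by norm_num)
    refine h.congr' ?_
    filter_upwards [eventually_ge_atTop (0:ℝ)] with x hx
    exact (Real.sqrt_eq_rpow x).symm
  have hsqrt : Tendsto (fun M : ℕ => Real.sqrt M) atTop atTop :=
    hsqrt0.comp tendsto_natCast_atTop_atTop
  have hp : Tendsto p atTop (nhds 0) :=
    Tendsto.div_atTop tendsto_const_nhds hsqrt
  -- numerator tends to τ Eu² βk²
  have hN : Tendsto (fun M : ℕ =>
      (τ : ℝ) * p M ^ 2 * ((M : ℝ) - K) * (β k) ^ 2) atTop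
      (nhds ((τ : ℝ) * (β k) ^ 2 * Eu ^ 2)) := by
    have hKM : Tendsto (fun M : ℕ => (K : ℝ) / M) atTop (nhds 0) :=
      tendsto_const_div_atTop_nhds_zero_nat _
    have h1 : Tendsto (fun M : ℕ =>
        (τ : ℝ) * (β k) ^ 2 * Eu ^ 2 * (1 - (K : ℝ) / M)) atTop
        (nhds ((τ : ℝ) * (β k) ^ 2 * Eu ^ 2)) := by
      have := (tendsto_const_nhds (x := (1:ℝ)) (f := atTop (α := ℕ))).sub hKM
      simpa using (tendsto_const_nhds.mul this :
        Tendsto (fun M : ℕ => (τ : ℝ) * (β k) ^ 2 * Eu ^ 2 * (1 - (K : ℝ) / M))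
          atTop (nhds ((τ : ℝ) * (β k) ^ 2 * Eu ^ 2 * (1 - 0))))
    refine h1.congr' ?_
    filter_upwards [eventually_ge_atTop 1] with M hM
    have hM0 : (0:ℝ) < (M : ℝ) := by exact_mod_cast hM
    have hsq : Real.sqrt M ^ 2 = (M : ℝ) := Real.sq_sqrt hM0.le
    have hs0 : Real.sqrt (M : ℝ) ≠ 0 := by positivity
    simp only [hp_def, div_pow, hsq]
    field_simp
  -- denominator tends to 1
  have hterm : ∀ i : Fin K, Tendsto (fun M : ℕ =>
      p M * β i / ((τ : ℝ) * p M * β i + 1)) atTop (nhds 0) := by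
    intro i
    have h1 : Tendsto (fun M : ℕ => p M * β i) atTop (nhds 0) := by
      simpa using hp.mul_const (β i)
    have h2 : Tendsto (fun M : ℕ => (τ : ℝ) * p M * β i + 1) atTop (nhds 1) := by
      have := (((tendsto_const_nhds (x := (τ:ℝ))).mul hp).mul_const (β i)).add_const (1:ℝ)
      simpa using this
    simpa only [zero_div, Pi.div_def] using h1.div h2 one_ne_zero
  have hS : Tendsto (fun M : ℕ =>
      ∑ i : Fin K, p M * β i / ((τ : ℝ) * p M * β i + 1)) atTop (nhds 0) := by
    have := tendsto_finset_sum (univ : Finset (Fin K)) (fun i _ => hterm i)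
    simpa using this
  have hpk : Tendsto (fun M : ℕ => (τ : ℝ) * p M * β k + 1) atTop (nhds 1) := by
    have := (((tendsto_const_nhds (x := (τ:ℝ))).mul hp).mul_const (β k)).add_const (1:ℝ)
    simpa using this
  have hD : Tendsto (fun M : ℕ =>
      ((τ : ℝ) * p M * β k + 1)
        * ∑ i : Fin K, p M * β i / ((τ : ℝ) * p M * β i + 1)
      + (τ : ℝ) * p M * β k + 1) atTop (nhds 1) := by
    have := (hpk.mul hS).add hpk
    have h2 : Tendsto (fun M : ℕ =>
        (((τ : ℝ) * p M * β k + 1)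
          * ∑ i : Fin K, p M * β i / ((τ : ℝ) * p M * β i + 1))
        + ((τ : ℝ) * p M * β k + 1)) atTop (nhds (1 * 0 + 1)) := this
    simpa [add_assoc] using h2
  have hfrac : Tendsto (fun M : ℕ =>
      (τ : ℝ) * p M ^ 2 * ((M : ℝ) - K) * (β k) ^ 2
      / (((τ : ℝ) * p M * β k + 1)
          * ∑ i : Fin K, p M * β i / ((τ : ℝ) * p M * β i + 1)
        + (τ : ℝ) * p M * β k + 1)) atTop
      (nhds ((τ : ℝ) * (β k) ^ 2 * Eu ^ 2)) := by
    simpa only [div_one, Pi.div_def] using hN.div hD one_ne_zero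
  have hinner : Tendsto (fun M : ℕ => 1 +
      (τ : ℝ) * p M ^ 2 * ((M : ℝ) - K) * (β k) ^ 2
      / (((τ : ℝ) * p M * β k + 1)
          * ∑ i : Fin K, p M * β i / ((τ : ℝ) * p M * β i + 1)
        + (τ : ℝ) * p M * β k + 1)) atTop
      (nhds (1 + (τ : ℝ) * (β k) ^ 2 * Eu ^ 2)) :=
    tendsto_const_nhds.add hfrac
  have hL : (1 : ℝ) + (τ : ℝ) * (β k) ^ 2 * Eu ^ 2 ≠ 0 := by
    have hb := hβ k
    have hτ' : (0:ℝ) < (τ : ℝ) := by exact_mod_cast hτ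
    positivity
  have hcont : ContinuousAt (Real.logb 2) (1 + (τ : ℝ) * (β k) ^ 2 * Eu ^ 2) :=
    Real.continuousAt_logb hL
  exact hcont.tendsto.comp hinner
end

section
/- Sharpness of the √M scaling: if p_u = E_u/M^α with α > 1/2, then the SINR expression τ p_u² (M−1) β_k² / (p_u(τ p_u β_k + 1) Σ_{i≠k} β_i + (τ+1) p_u β_k + 1) tends to 0 as M → ∞; if α < 1/2 it tends to ∞; if α = 1/2 it tends to the finite positive limit τ β_k² E_u². -/
open Filter Finset

/-- Sharpness of the `√M` scaling. With `p_u = E_u/M^α`, the effective SINR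
`τ p_u² (M−1) β_k² / (p_u(τ p_u β_k + 1) ∑_{i≠k} β_i + (τ+1) p_u β_k + 1)` tends to `0`
if `α > 1/2`, to `∞` if `α < 1/2`, and to `τ β_k² E_u²` if `α = 1/2`, as `M → ∞`. -/
theorem stmt15 (K : ℕ) (k : Fin K) (β : Fin K → ℝ) (hβ : ∀ i, 0 < β i)
    (τ : ℕ) (hτ : 1 ≤ τ) (Eu : ℝ) (hEu : 0 < Eu) (α : ℝ) (hα : 0 < α)
    (SINR : ℕ → ℝ)
    (hSINR : ∀ M : ℕ, SINR M =
      (τ : ℝ) * (Eu / (M : ℝ) ^ α) ^ 2 * ((M : ℝ) - 1) * (β k) ^ 2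
        / ((Eu / (M : ℝ) ^ α) * ((τ : ℝ) * (Eu / (M : ℝ) ^ α) * β k + 1)
              * ∑ i ∈ univ \ {k}, β i
            + ((τ : ℝ) + 1) * (Eu / (M : ℝ) ^ α) * β k + 1)) :
    (1 / 2 < α → Tendsto SINR atTop (nhds 0)) ∧
    (α < 1 / 2 → Tendsto SINR atTop atTop) ∧
    (α = 1 / 2 → Tendsto SINR atTop (nhds ((τ : ℝ) * (β k) ^ 2 * Eu ^ 2))) := by
  have hβk := hβ k
  have hτR : (0:ℝ) < τ := by exact_mod_cast hτ
  set p : ℕ → ℝ := fun M => Eu / (M : ℝ) ^ α with hpdef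
  have hp0 : Tendsto p atTop (nhds 0) := by
    apply Tendsto.div_atTop (tendsto_const_nhds (x := Eu))
    exact (tendsto_rpow_atTop hα).comp tendsto_natCast_atTop_atTop
  set S : ℝ := ∑ i ∈ univ \ {k}, β i with hSdef
  set D : ℕ → ℝ := fun M =>
      p M * ((τ:ℝ) * p M * β k + 1) * S + ((τ:ℝ)+1) * p M * β k + 1 with hDdef
  have hD1 : Tendsto D atTop (nhds 1) := by
    have h : Tendsto D atTop
        (nhds ((0:ℝ) * ((τ:ℝ)*0*β k + 1) * S + ((τ:ℝ)+1)*0*β k + 1)) := by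
      exact (((hp0.mul ((((tendsto_const_nhds (x := (τ:ℝ))).mul hp0).mul
        tendsto_const_nhds).add tendsto_const_nhds)).mul tendsto_const_nhds).add
        (((tendsto_const_nhds (x := (τ:ℝ)+1)).mul hp0).mul tendsto_const_nhds)).add
        tendsto_const_nhds
    simpa using h
  set C : ℝ := (τ:ℝ) * β k ^ 2 * Eu ^ 2 with hCdef
  have hC : 0 < C := by positivity
  set N : ℕ → ℝ := fun M => (τ:ℝ) * p M ^ 2 * ((M:ℝ) - 1) * β k ^ 2 with hNdef
  have hSINR' : ∀ M, SINR M = N M / D M := fun M => hSINR M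
  set g : ℕ → ℝ := fun M => ((M:ℝ) - 1) / (M:ℝ) ^ (2*α) with hgdef
  have hNg : N =ᶠ[atTop] fun M => C * g M := by
    filter_upwards [eventually_ge_atTop 1] with M hM
    have hx0 : (0:ℝ) < (M:ℝ) := by exact_mod_cast hM
    have hne : ((M:ℝ) ^ (2*α)) ≠ 0 := (Real.rpow_pos_of_pos hx0 _).ne'
    have hne' : ((M:ℝ) ^ α) ≠ 0 := (Real.rpow_pos_of_pos hx0 _).ne'
    have hsq : ((M:ℝ) ^ α) ^ 2 = (M:ℝ) ^ (2*α) := by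
      rw [← Real.rpow_natCast ((M:ℝ)^α) 2, ← Real.rpow_mul hx0.le]
      norm_num [mul_comm]
    simp only [hNdef, hgdef, hCdef, hpdef]
    rw [div_pow, hsq]
    field_simp
  have hgsplit : g =ᶠ[atTop]
      fun M => (M:ℝ) ^ (1 - 2*α) - (M:ℝ) ^ (-(2*α)) := by
    filter_upwards [eventually_ge_atTop 1] with M hM
    have hx0 : (0:ℝ) < (M:ℝ) := by exact_mod_cast hM
    simp only [hgdef]
    rw [Real.rpow_sub hx0, Real.rpow_one, Real.rpow_neg hx0.le,
      sub_div, inv_eq_one_div]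
  have hneg : Tendsto (fun M : ℕ => (M:ℝ) ^ (-(2*α))) atTop (nhds 0) :=
    (tendsto_rpow_neg_atTop (by linarith)).comp tendsto_natCast_atTop_atTop
  refine ⟨?_, ?_, ?_⟩
  · intro h
    have h1 : Tendsto (fun M : ℕ => (M:ℝ) ^ (1 - 2*α)) atTop (nhds 0) := by
      have e : 1 - 2*α = -(2*α - 1) := by ring
      rw [e]
      exact (tendsto_rpow_neg_atTop (by linarith)).comp tendsto_natCast_atTop_atTop
    have hg0 : Tendsto g atTop (nhds 0) := by
      refine Tendsto.congr' hgsplit.symm ?_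
      simpa using h1.sub hneg
    have hN0 : Tendsto N atTop (nhds 0) := by
      refine Tendsto.congr' hNg.symm ?_
      simpa using (tendsto_const_nhds (x := C)).mul hg0
    have := hN0.div hD1 one_ne_zero
    simp only [zero_div] at this
    exact this.congr fun M => (hSINR' M).symm
  · intro h
    have h1 : Tendsto (fun M : ℕ => (M:ℝ) ^ (1 - 2*α)) atTop atTop :=
      (tendsto_rpow_atTop (by linarith)).comp tendsto_natCast_atTop_atTop
    have hgT : Tendsto g atTop atTop := by
      refine Tendsto.congr' hgsplit.symm ?_
      have := h1.atTop_add (hneg.neg)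
      simpa [sub_eq_add_neg] using this
    have hNT : Tendsto N atTop atTop := by
      refine Tendsto.congr' hNg.symm (hgT.const_mul_atTop hC)
    have hDi : Tendsto (fun M => (D M)⁻¹) atTop (nhds 1) := by
      simpa using hD1.inv₀ one_ne_zero
    have := Tendsto.atTop_mul_pos (one_pos) hNT hDi
    refine this.congr fun M => ?_
    rw [← div_eq_mul_inv]
    exact (hSINR' M).symm
  · intro h
    subst h
    have hg1 : Tendsto g atTop (nhds 1) := by
      have heq : g =ᶠ[atTop] fun M : ℕ => 1 - 1/(M:ℝ) := by
        filter_upwards [eventually_ge_atTop 1] with M hM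
        have hx0 : (0:ℝ) < (M:ℝ) := by exact_mod_cast hM
        simp only [hgdef]
        rw [show 2 * (1/2 : ℝ) = 1 by norm_num, Real.rpow_one]
        field_simp
      refine Tendsto.congr' heq.symm ?_
      simpa using (tendsto_const_nhds (x := (1:ℝ))).sub tendsto_one_div_atTop_nhds_zero_nat
    have hNC : Tendsto N atTop (nhds C) := by
      refine Tendsto.congr' hNg.symm ?_
      simpa using (tendsto_const_nhds (x := C)).mul hg1
    have := hNC.div hD1 one_ne_zero
    simp only [div_one] at this
    exact (this.congr fun M => (hSINR' M).symm)
end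

section
/- Low-power quadratic behavior of MRC rate: for R(p) = ((T−τ)/T) K log₂(1 + τ(M−1)p²/(τ(K−1)p² + (K+τ)p + 1)), one has R(0) = 0, R′(0) = 0, and R″(0) = 2 ((T−τ)/T) K (log₂ e) τ (M−1); equivalently R(p)/p² → ((T−τ)/T) K (log₂ e) τ (M−1) as p → 0⁺. -/
open Filter Topology

lemma quadDeriv (B d p : ℝ) :
    HasDerivAt (fun q : ℝ => B * q ^ 2 + d * q + 1) (2 * B * p + d) p := by
  have h := (((hasDerivAt_pow 2 p).const_mul B).add
    ((hasDerivAt_id p).const_mul d)).add_const 1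
  convert h using 2 <;> first | rfl | (push_cast; ring) | simp

lemma linDeriv (B d p : ℝ) : HasDerivAt (fun q : ℝ => 2 * B * q + d) (2 * B) p := by
  have h := ((hasDerivAt_id p).const_mul (2 * B)).add_const d
  simpa using h

lemma quadRatio (B d : ℝ) :
    HasDerivAt (fun p : ℝ => (2 * B * p + d) / (B * p ^ 2 + d * p + 1))
      (2 * B - d ^ 2) 0 := by
  have h := (linDeriv B d 0).div (quadDeriv B d 0) (by norm_num)
  convert h using 1
  all_goals first | rfl | (norm_num; ring)

lemma main_aux (c a b d : ℝ) (ha : 0 < a) (hb : 0 ≤ b) (hd : 0 < d)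
    (R : ℝ → ℝ)
    (hR : ∀ p : ℝ, R p = c * Real.logb 2 (1 + a * p ^ 2 / (b * p ^ 2 + d * p + 1))) :
    R 0 = 0 ∧ deriv R 0 = 0 ∧
    deriv (deriv R) 0 = 2 * (c * (1 / Real.log 2) * a) ∧
    Tendsto (fun p => R p / p ^ 2) (𝓝[>] (0:ℝ)) (𝓝 (c * (1 / Real.log 2) * a)) := by
  have hDpos : ∀ᶠ p in 𝓝 (0:ℝ), 0 < b * p ^ 2 + d * p + 1 := by
    have hc : ContinuousAt (fun p : ℝ => b * p ^ 2 + d * p + 1) 0 := by fun_prop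
    have h1 : (0:ℝ) < b * (0:ℝ) ^ 2 + d * 0 + 1 := by norm_num
    exact hc.tendsto.eventually (eventually_gt_nhds h1)
  have hNpos : ∀ᶠ p in 𝓝 (0:ℝ), 0 < (a + b) * p ^ 2 + d * p + 1 := by
    have hc : ContinuousAt (fun p : ℝ => (a + b) * p ^ 2 + d * p + 1) 0 := by fun_prop
    have h1 : (0:ℝ) < (a + b) * (0:ℝ) ^ 2 + d * 0 + 1 := by norm_num
    exact hc.tendsto.eventually (eventually_gt_nhds h1)
  have heq : R =ᶠ[𝓝 (0:ℝ)] (fun p =>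
      c / Real.log 2 * (Real.log ((a + b) * p ^ 2 + d * p + 1)
        - Real.log (b * p ^ 2 + d * p + 1))) := by
    filter_upwards [hDpos, hNpos] with p hD hN
    have h1 : 1 + a * p ^ 2 / (b * p ^ 2 + d * p + 1)
        = ((a + b) * p ^ 2 + d * p + 1) / (b * p ^ 2 + d * p + 1) := by
      rw [eq_div_iff hD.ne', add_mul, div_mul_cancel₀ _ hD.ne']
      ring
    rw [hR, h1, Real.logb, Real.log_div hN.ne' hD.ne']
    ring
  have hR0 : R 0 = 0 := by rw [hR]; norm_num
  -- eventual formula for deriv of F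
  have hDeriv1 : ∀ᶠ p in 𝓝 (0:ℝ),
      HasDerivAt (fun p => c / Real.log 2 * (Real.log ((a + b) * p ^ 2 + d * p + 1)
        - Real.log (b * p ^ 2 + d * p + 1)))
        (c / Real.log 2 * ((2 * (a + b) * p + d) / ((a + b) * p ^ 2 + d * p + 1)
          - (2 * b * p + d) / (b * p ^ 2 + d * p + 1))) p := by
    filter_upwards [hDpos, hNpos] with p hD hN
    exact (((quadDeriv (a + b) d p).log hN.ne').sub
      ((quadDeriv b d p).log hD.ne')).const_mul (c / Real.log 2)
  have hdF : deriv (fun p => c / Real.log 2 * (Real.log ((a + b) * p ^ 2 + d * p + 1)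
        - Real.log (b * p ^ 2 + d * p + 1)))
      =ᶠ[𝓝 (0:ℝ)] (fun p =>
        c / Real.log 2 * ((2 * (a + b) * p + d) / ((a + b) * p ^ 2 + d * p + 1)
          - (2 * b * p + d) / (b * p ^ 2 + d * p + 1))) :=
    hDeriv1.mono fun p hp => hp.deriv
  have hd1 : deriv R 0 = 0 := by
    rw [heq.deriv_eq, hdF.self_of_nhds]
    norm_num
  have hd2 : deriv (deriv R) 0 = 2 * (c * (1 / Real.log 2) * a) := by
    have e1 : deriv (deriv R) 0 = deriv (fun p =>
        c / Real.log 2 * ((2 * (a + b) * p + d) / ((a + b) * p ^ 2 + d * p + 1)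
          - (2 * b * p + d) / (b * p ^ 2 + d * p + 1))) 0 := by
      rw [(heq.deriv).deriv_eq, hdF.deriv_eq]
    have h2 : HasDerivAt (fun p =>
        c / Real.log 2 * ((2 * (a + b) * p + d) / ((a + b) * p ^ 2 + d * p + 1)
          - (2 * b * p + d) / (b * p ^ 2 + d * p + 1)))
        (c / Real.log 2 * ((2 * (a + b) - d ^ 2) - (2 * b - d ^ 2))) 0 :=
      ((quadRatio (a + b) d).sub (quadRatio b d)).const_mul (c / Real.log 2)
    rw [e1, h2.deriv]
    ring
  refine ⟨hR0, hd1, hd2, ?_⟩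
  -- the limit
  have hlog2 : Real.log 2 ≠ 0 := (Real.log_pos (by norm_num)).ne'
  have hflim : Tendsto (fun p => a * p ^ 2 / (b * p ^ 2 + d * p + 1)) (𝓝[>] (0:ℝ))
      (𝓝[≠] (0:ℝ)) := by
    rw [tendsto_nhdsWithin_iff]
    constructor
    · have hfc : ContinuousAt (fun p : ℝ => a * p ^ 2 / (b * p ^ 2 + d * p + 1)) 0 :=
        ContinuousAt.div (by fun_prop) (by fun_prop) (by norm_num)
      have := hfc.tendsto.mono_left (nhdsWithin_le_nhds (s := Set.Ioi (0:ℝ)))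
      simpa using this
    · filter_upwards [hDpos.filter_mono nhdsWithin_le_nhds, self_mem_nhdsWithin]
        with p hD (hp : 0 < p)
      have : 0 < a * p ^ 2 / (b * p ^ 2 + d * p + 1) := by positivity
      simpa using this.ne'
  have hlog1 : Tendsto (fun x : ℝ => Real.log (1 + x) / x) (𝓝[≠] (0:ℝ)) (𝓝 1) := by
    have hda : HasDerivAt (fun x : ℝ => Real.log (1 + x)) 1 0 := by
      have h := ((hasDerivAt_id (0:ℝ)).const_add 1).log (by norm_num)
      convert h using 1
      all_goals first | rfl | simp
    have h := hasDerivAt_iff_tendsto_slope.mp hda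
    refine h.congr (fun x => ?_)
    simp [slope_def_field, Real.log_one]
  have hcomp : Tendsto (fun p => Real.log (1 + a * p ^ 2 / (b * p ^ 2 + d * p + 1))
      / (a * p ^ 2 / (b * p ^ 2 + d * p + 1))) (𝓝[>] (0:ℝ)) (𝓝 1) := hlog1.comp hflim
  have hratio : Tendsto (fun p => (a * p ^ 2 / (b * p ^ 2 + d * p + 1)) / p ^ 2)
      (𝓝[>] (0:ℝ)) (𝓝 a) := by
    have hfc : ContinuousAt (fun p : ℝ => a / (b * p ^ 2 + d * p + 1)) 0 :=
      ContinuousAt.div (by fun_prop) (by fun_prop) (by norm_num)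
    have h0 : Tendsto (fun p : ℝ => a / (b * p ^ 2 + d * p + 1)) (𝓝[>] (0:ℝ)) (𝓝 a) := by
      have := hfc.tendsto.mono_left (nhdsWithin_le_nhds (s := Set.Ioi (0:ℝ)))
      simpa using this
    refine h0.congr' ?_
    filter_upwards [hDpos.filter_mono nhdsWithin_le_nhds, self_mem_nhdsWithin]
      with p hD (hp : 0 < p)
    field_simp
  have hmain : Tendsto (fun p =>
      c / Real.log 2 * (Real.log (1 + a * p ^ 2 / (b * p ^ 2 + d * p + 1))
        / (a * p ^ 2 / (b * p ^ 2 + d * p + 1)))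
      * ((a * p ^ 2 / (b * p ^ 2 + d * p + 1)) / p ^ 2)) (𝓝[>] (0:ℝ))
      (𝓝 (c / Real.log 2 * 1 * a)) :=
    (tendsto_const_nhds.mul hcomp).mul hratio
  have hfinal : Tendsto (fun p => R p / p ^ 2) (𝓝[>] (0:ℝ))
      (𝓝 (c / Real.log 2 * 1 * a)) := by
    refine hmain.congr' ?_
    filter_upwards [hDpos.filter_mono nhdsWithin_le_nhds, self_mem_nhdsWithin]
      with p hD (hp : 0 < p)
    have hf : a * p ^ 2 / (b * p ^ 2 + d * p + 1) ≠ 0 := by positivity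
    rw [hR, Real.logb]
    field_simp
  convert hfinal using 2
  ring

/-- Low-power quadratic behavior of the MRC rate. For
`R(p) = ((T−τ)/T) K log₂(1 + τ(M−1)p²/(τ(K−1)p² + (K+τ)p + 1))`, one has `R(0) = 0`,
`R′(0) = 0`, `R″(0) = 2 ((T−τ)/T) K (log₂ e) τ (M−1)`; equivalently
`R(p)/p² → ((T−τ)/T) K (log₂ e) τ (M−1)` as `p → 0⁺`. -/
theorem stmt17 (M K τ T : ℕ) (hM : 2 ≤ M) (hK : 1 ≤ K) (hτ : 1 ≤ τ) (hτT : τ < T)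
    (R : ℝ → ℝ)
    (hR : ∀ p : ℝ, R p = (((T : ℝ) - τ) / T) * K *
      Real.logb 2 (1 + (τ : ℝ) * ((M : ℝ) - 1) * p ^ 2
        / ((τ : ℝ) * ((K : ℝ) - 1) * p ^ 2 + ((K : ℝ) + τ) * p + 1))) :
    R 0 = 0 ∧ deriv R 0 = 0 ∧
    deriv (deriv R) 0
      = 2 * ((((T : ℝ) - τ) / T) * K * Real.logb 2 (Real.exp 1) * τ * ((M : ℝ) - 1)) ∧
    Tendsto (fun p => R p / p ^ 2) (nhdsWithin 0 (Set.Ioi 0))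
      (nhds ((((T : ℝ) - τ) / T) * K * Real.logb 2 (Real.exp 1) * τ * ((M : ℝ) - 1))) := by
  have hτ1 : (1:ℝ) ≤ (τ:ℝ) := by exact_mod_cast hτ
  have hM2 : (2:ℝ) ≤ (M:ℝ) := by exact_mod_cast hM
  have hK1 : (1:ℝ) ≤ (K:ℝ) := by exact_mod_cast hK
  have key := main_aux ((((T : ℝ) - τ) / T) * K) ((τ : ℝ) * ((M : ℝ) - 1))
    ((τ : ℝ) * ((K : ℝ) - 1)) ((K : ℝ) + τ)
    (mul_pos (by linarith) (by linarith)) (mul_nonneg (by linarith) (by linarith))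
    (by linarith) R hR
  obtain ⟨k1, k2, k3, k4⟩ := key
  have hlogb : Real.logb 2 (Real.exp 1) = 1 / Real.log 2 := by
    simp [Real.logb]
  refine ⟨k1, k2, ?_, ?_⟩
  · rw [k3, hlogb]; ring
  · convert k4 using 2
    rw [hlogb]; ring
end

section
/- Low-power energy–spectral efficiency relation: in the limit p → 0⁺, the MRC energy efficiency η(p) = R(p)/p and spectral efficiency R(p) satisfy η(p)/√(R(p)) → √(((T−τ)/T) K (log₂ e) τ (M−1)), so that asymptotically η = √(c·R) with c = ((T−τ)/T) K (log₂ e) τ (M−1). -/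
open Filter

set_option maxHeartbeats 1000000 in
/-- Low-power energy–spectral efficiency relation. In the limit `p → 0⁺`,
`η(p)/√(R(p)) → √c` where `c = ((T−τ)/T) K (log₂ e) τ (M−1)`, i.e. asymptotically
`η = √(c R)`. -/
theorem stmt18 (M K τ T : ℕ) (hM : 2 ≤ M) (hK : 1 ≤ K) (hτ : 1 ≤ τ) (hτT : τ < T)
    (R η : ℝ → ℝ)
    (hR : ∀ p : ℝ, R p = (((T : ℝ) - τ) / T) * K *
      Real.logb 2 (1 + (τ : ℝ) * ((M : ℝ) - 1) * p ^ 2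
        / ((τ : ℝ) * ((K : ℝ) - 1) * p ^ 2 + ((K : ℝ) + τ) * p + 1)))
    (hη : ∀ p : ℝ, η p = R p / p) :
    Tendsto (fun p => η p / Real.sqrt (R p)) (nhdsWithin 0 (Set.Ioi 0))
      (nhds (Real.sqrt ((((T : ℝ) - τ) / T) * K * Real.logb 2 (Real.exp 1) * τ * ((M : ℝ) - 1)))) := by
  have hτR : (1:ℝ) ≤ (τ:ℝ) := by exact_mod_cast hτ
  have hKR : (1:ℝ) ≤ (K:ℝ) := by exact_mod_cast hK
  have hMR : (2:ℝ) ≤ (M:ℝ) := by exact_mod_cast hM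
  have hTτ : (τ:ℝ) < T := by exact_mod_cast hτT
  have hT0 : (0:ℝ) < T := lt_of_le_of_lt (le_trans zero_le_one hτR) hTτ
  set A : ℝ := (((T:ℝ) - τ) / T) * K with hAdef
  have hA0 : 0 < A := by
    apply mul_pos
    · exact div_pos (by linarith) hT0
    · linarith
  set D : ℝ → ℝ := fun p => (τ:ℝ) * ((K:ℝ)-1) * p^2 + ((K:ℝ)+τ)*p + 1 with hDdef
  set x : ℝ → ℝ := fun p => (τ:ℝ)*((M:ℝ)-1)*p^2 / D p with hxdef
  have hD : ∀ p : ℝ, 0 < p → 0 < D p := by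
    intro p hp
    have h1 : 0 ≤ (τ:ℝ) * ((K:ℝ)-1) * p^2 := by
      apply mul_nonneg (mul_nonneg (by linarith) (by linarith)) (sq_nonneg p)
    have h2 : 0 < ((K:ℝ)+τ)*p := mul_pos (by linarith) hp
    simp only [hDdef]; linarith
  have hx : ∀ p : ℝ, 0 < p → 0 < x p := by
    intro p hp
    apply div_pos _ (hD p hp)
    exact mul_pos (mul_pos (by linarith) (by linarith)) (by positivity)
  have hDcont : Tendsto D (nhds 0) (nhds 1) := by
    have : Continuous D := by simp only [hDdef]; continuity
    have h := this.tendsto 0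
    simpa [hDdef] using h
  have hxlim : Tendsto x (nhdsWithin 0 (Set.Ioi 0)) (nhds 0) := by
    have hnum : Tendsto (fun p : ℝ => (τ:ℝ)*((M:ℝ)-1)*p^2) (nhds 0) (nhds 0) := by
      have : Continuous (fun p : ℝ => (τ:ℝ)*((M:ℝ)-1)*p^2) := by continuity
      simpa using this.tendsto 0
    have := (hnum.div hDcont one_ne_zero)
    rw [zero_div] at this
    exact this.mono_left nhdsWithin_le_nhds
  have hslope : Tendsto (fun y : ℝ => Real.log y / (y - 1)) (nhdsWithin 1 {(1:ℝ)}ᶜ) (nhds 1) := by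
    have h := hasDerivAt_iff_tendsto_slope.mp (Real.hasDerivAt_log one_ne_zero)
    have h2 : slope Real.log 1 = fun y : ℝ => Real.log y / (y - 1) := by
      ext y; rw [slope_def_field, Real.log_one, sub_zero]
    rw [h2] at h
    simpa using h
  have h1x : Tendsto (fun p => 1 + x p) (nhdsWithin 0 (Set.Ioi 0)) (nhdsWithin 1 {(1:ℝ)}ᶜ) := by
    apply tendsto_nhdsWithin_of_tendsto_nhds_of_eventually_within
    · simpa using (tendsto_const_nhds.add hxlim)
    · filter_upwards [self_mem_nhdsWithin] with p hp
      have := hx p hp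
      simp only [Set.mem_compl_iff, Set.mem_singleton_iff]
      linarith
  have hlogdiv : Tendsto (fun p => Real.log (1 + x p) / (x p)) (nhdsWithin 0 (Set.Ioi 0)) (nhds 1) := by
    refine (hslope.comp h1x).congr fun p => ?_
    simp only [Function.comp_apply, add_sub_cancel_left]
  have hxp2 : Tendsto (fun p => x p / p^2) (nhdsWithin 0 (Set.Ioi 0)) (nhds ((τ:ℝ)*((M:ℝ)-1))) := by
    have h1 : Tendsto (fun p : ℝ => (τ:ℝ)*((M:ℝ)-1) / D p) (nhdsWithin 0 (Set.Ioi 0)) (nhds ((τ:ℝ)*((M:ℝ)-1))) := by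
      have := ((tendsto_const_nhds : Tendsto (fun _ : ℝ => (τ:ℝ)*((M:ℝ)-1)) (nhds 0) (nhds ((τ:ℝ)*((M:ℝ)-1)))).div hDcont one_ne_zero)
      rw [div_one] at this
      exact this.mono_left nhdsWithin_le_nhds
    apply h1.congr'
    filter_upwards [self_mem_nhdsWithin] with p hp
    have hp0 : p ≠ 0 := ne_of_gt hp
    have hDp : D p ≠ 0 := ne_of_gt (hD p hp)
    simp only [hxdef]
    field_simp
  have hlog2 : Real.log 2 ≠ 0 := by
    have : (1:ℝ) < 2 := one_lt_two
    exact ne_of_gt (Real.log_pos this)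
  have hRlim : Tendsto (fun p => R p / p^2) (nhdsWithin 0 (Set.Ioi 0))
      (nhds (A * Real.logb 2 (Real.exp 1) * τ * ((M:ℝ)-1))) := by
    have hmain : Tendsto (fun p => (A / Real.log 2) * (Real.log (1 + x p) / x p) * (x p / p^2))
        (nhdsWithin 0 (Set.Ioi 0)) (nhds ((A / Real.log 2) * 1 * ((τ:ℝ)*((M:ℝ)-1)))) :=
      (tendsto_const_nhds.mul hlogdiv).mul hxp2
    have heq : (A / Real.log 2) * 1 * ((τ:ℝ)*((M:ℝ)-1)) = A * Real.logb 2 (Real.exp 1) * τ * ((M:ℝ)-1) := by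
      rw [Real.logb, Real.log_exp]
      field_simp
    rw [← heq]
    apply hmain.congr'
    filter_upwards [self_mem_nhdsWithin] with p hp
    have hp0 : p ≠ 0 := ne_of_gt hp
    have hxp : x p ≠ 0 := ne_of_gt (hx p hp)
    have hDp : D p ≠ 0 := ne_of_gt (hD p hp)
    rw [hR p]
    have hxe : (τ:ℝ)*((M:ℝ)-1)*p^2 / D p = x p := rfl
    rw [hxe, Real.logb]
    field_simp
  have hfinal := (Real.continuous_sqrt.continuousAt (x := A * Real.logb 2 (Real.exp 1) * τ * ((M:ℝ)-1))).tendsto.comp hRlim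
  apply hfinal.congr'
  filter_upwards [self_mem_nhdsWithin] with p hp
  have hp0 : p ≠ 0 := ne_of_gt hp
  have hRp : 0 < R p := by
    rw [hR p]
    apply mul_pos hA0
    apply Real.logb_pos one_lt_two
    have hxe : (τ:ℝ)*((M:ℝ)-1)*p^2 / ((τ:ℝ)*((K:ℝ)-1)*p^2+((K:ℝ)+τ)*p+1) = x p := rfl
    rw [hxe]
    exact lt_add_of_pos_right 1 (hx p hp)
  have hsq : Real.sqrt (R p / p^2) = Real.sqrt (R p) / p := by
    rw [Real.sqrt_div hRp.le, Real.sqrt_sq hp.le]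
  simp only [Function.comp]
  rw [hsq, hη p, div_div]
  rw [div_eq_div_iff hp0 (ne_of_gt (mul_pos hp (Real.sqrt_pos.mpr hRp)))]
  have hm : Real.sqrt (R p) * Real.sqrt (R p) = R p := Real.mul_self_sqrt hRp.le
  calc Real.sqrt (R p) * (p * Real.sqrt (R p)) = (Real.sqrt (R p) * Real.sqrt (R p)) * p := by ring
    _ = R p * p := by rw [hm]
end
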